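/- In the 3-SAT reduction for Recoverable Selection (Theorem 2 construction) with k = 1 and p = m: the formula is satisfiable if and only if opt₂ = 0; and if the formula is unsatisfiable then opt₂ ≥ 1. Specifically, a selection X of p items with max_S f₂(X,S) = 0 exists iff one can choose exactly one literal-item per clause so that no two chosen items correspond to contradictory literals. -/
import Mathlib


open Finset

/-- The recoverable cost `f₂(X,S)`. -/
noncomputable def f2 {ι : Type*} [Fintype ι] [DecidableEq ι]
    (C c : ι → ℝ) (X : Finset ι) (p k : ℕ) : ℝ :=
  ∑ e ∈ X, C e +
    sInf {v : ℝ | ∃ Y : Finset ι, Y.card = p ∧ (Y \ X).card ≤ k ∧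
      v = ∑ e ∈ Y, c e}

/-- Two literal-items are contradictory if they correspond to the same variable
with opposite signs. -/
def Contr {nv m : ℕ} (cl : Fin m → Fin 3 → Fin nv × Bool)
    (e e' : Fin m × Fin 3) : Prop :=
  (cl e.1 e.2).1 = (cl e'.1 e'.2).1 ∧ (cl e.1 e.2).2 ≠ (cl e'.1 e'.2).2

/-- The scenario set of the 3-SAT reduction: one scenario per pair of
contradictory literal-items and one per clause. -/
def SatScenarios {nv m : ℕ} (cl : Fin m → Fin 3 → Fin nv × Bool) :
    Set ((Fin m × Fin 3) ⊕ Unit → ℝ) :=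
  {c | (∃ e e' : Fin m × Fin 3, Contr cl e e' ∧
          c = fun it => if it = Sum.inl e ∨ it = Sum.inl e' then 1 else 0) ∨
       (∃ i : Fin m,
          c = fun it => match it with
            | Sum.inl (i', _) => if i' = i then 1 else 0
            | Sum.inr _ => 0)}

section Aux

lemma innerSet_finite {ι : Type*} [Fintype ι] [DecidableEq ι] (c : ι → ℝ)
    (X : Finset ι) (p k : ℕ) :
    {v : ℝ | ∃ Y : Finset ι, Y.card = p ∧ (Y \ X).card ≤ k ∧
      v = ∑ e ∈ Y, c e}.Finite := by
  apply (Set.finite_range (fun Y : Finset ι => ∑ e ∈ Y, c e)).subset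
  rintro v ⟨Y, -, -, rfl⟩
  exact ⟨Y, rfl⟩

lemma innerSet_nonempty {ι : Type*} [Fintype ι] [DecidableEq ι] (c : ι → ℝ)
    {X : Finset ι} {p : ℕ} (k : ℕ) (hX : X.card = p) :
    {v : ℝ | ∃ Y : Finset ι, Y.card = p ∧ (Y \ X).card ≤ k ∧
      v = ∑ e ∈ Y, c e}.Nonempty :=
  ⟨∑ e ∈ X, c e, X, hX, by simp, rfl⟩

lemma sInf_inner_nonneg {ι : Type*} [Fintype ι] [DecidableEq ι] {c : ι → ℝ}
    (hc : ∀ e, 0 ≤ c e) (X : Finset ι) (p k : ℕ) :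
    0 ≤ sInf {v : ℝ | ∃ Y : Finset ι, Y.card = p ∧ (Y \ X).card ≤ k ∧
      v = ∑ e ∈ Y, c e} := by
  apply Real.sInf_nonneg
  rintro v ⟨Y, -, -, rfl⟩
  exact Finset.sum_nonneg fun e _ => hc e

lemma f2_nonneg {ι : Type*} [Fintype ι] [DecidableEq ι] {C c : ι → ℝ}
    (hC : ∀ e, 0 ≤ C e) (hc : ∀ e, 0 ≤ c e) (X : Finset ι) (p k : ℕ) :
    0 ≤ f2 C c X p k :=
  add_nonneg (Finset.sum_nonneg fun e _ => hC e) (sInf_inner_nonneg hc X p k)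

lemma sumC_le_f2 {ι : Type*} [Fintype ι] [DecidableEq ι] {C c : ι → ℝ}
    (hc : ∀ e, 0 ≤ c e) (X : Finset ι) (p k : ℕ) :
    ∑ e ∈ X, C e ≤ f2 C c X p k := by
  have := sInf_inner_nonneg (c := c) hc X p k
  unfold f2; linarith

lemma f2_eq_zero {ι : Type*} [Fintype ι] [DecidableEq ι] {C c : ι → ℝ}
    {X : Finset ι} {p k : ℕ} (hCX : ∑ e ∈ X, C e = 0)
    (hc : ∀ e, 0 ≤ c e)
    (hY : ∃ Y : Finset ι, Y.card = p ∧ (Y \ X).card ≤ k ∧ ∑ e ∈ Y, c e = 0) :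
    f2 C c X p k = 0 := by
  obtain ⟨Y, h1, h2, h3⟩ := hY
  have hle : sInf {v : ℝ | ∃ Y : Finset ι, Y.card = p ∧ (Y \ X).card ≤ k ∧
      v = ∑ e ∈ Y, c e} ≤ 0 :=
    csInf_le (innerSet_finite c X p k).bddBelow ⟨Y, h1, h2, h3.symm⟩
  have hge := sInf_inner_nonneg (c := c) hc X p k
  unfold f2; linarith

lemma f2_ge_one {ι : Type*} [Fintype ι] [DecidableEq ι] {C c : ι → ℝ}
    {X : Finset ι} {p k : ℕ} (hCX : 0 ≤ ∑ e ∈ X, C e) (hX : X.card = p)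
    (h : ∀ Y : Finset ι, Y.card = p → (Y \ X).card ≤ k → 1 ≤ ∑ e ∈ Y, c e) :
    1 ≤ f2 C c X p k := by
  have h1 : (1:ℝ) ≤ sInf {v : ℝ | ∃ Y : Finset ι, Y.card = p ∧ (Y \ X).card ≤ k ∧
      v = ∑ e ∈ Y, c e} := by
    apply le_csInf (innerSet_nonempty c k hX)
    rintro v ⟨Y, hY1, hY2, rfl⟩
    exact h Y hY1 hY2
  unfold f2; linarith

lemma sum_swap_ge {ι : Type*} [DecidableEq ι] {c : ι → ℝ}
    (h01 : ∀ e, 0 ≤ c e ∧ c e ≤ 1) {X Y : Finset ι} (hcard : X.card = Y.card)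
    (hYX : (Y \ X).card ≤ 1) (h2 : 2 ≤ ∑ e ∈ X, c e) : 1 ≤ ∑ e ∈ Y, c e := by
  have hXY : (X \ Y).card = (Y \ X).card := Finset.card_sdiff_comm hcard
  have hs : ∑ e ∈ X \ Y, c e ≤ 1 := by
    calc ∑ e ∈ X \ Y, c e ≤ ∑ _e ∈ X \ Y, (1:ℝ) :=
          Finset.sum_le_sum fun e _ => (h01 e).2
      _ = (X \ Y).card := by simp
      _ ≤ 1 := by rw [hXY]; exact_mod_cast hYX
  have hsplit : ∑ e ∈ X ∩ Y, c e + ∑ e ∈ X \ Y, c e = ∑ e ∈ X, c e :=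
    Finset.sum_inter_add_sum_sdiff X Y c
  have h3 : 1 ≤ ∑ e ∈ X ∩ Y, c e := by linarith
  calc (1:ℝ) ≤ ∑ e ∈ X ∩ Y, c e := h3
    _ ≤ ∑ e ∈ Y, c e :=
        Finset.sum_le_sum_of_subset_of_nonneg Finset.inter_subset_right
          fun e _ _ => (h01 e).1

lemma two_le_sum {ι : Type*} [DecidableEq ι] {c : ι → ℝ}
    (h0 : ∀ e, 0 ≤ c e) {a b : ι} (hab : a ≠ b) {X : Finset ι}
    (ha : a ∈ X) (hb : b ∈ X) (hca : c a = 1) (hcb : c b = 1) :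
    2 ≤ ∑ e ∈ X, c e := by
  have hp : ∑ e ∈ ({a, b} : Finset ι), c e = 2 := by
    rw [Finset.sum_pair hab, hca, hcb]; norm_num
  calc (2:ℝ) = ∑ e ∈ ({a, b} : Finset ι), c e := hp.symm
    _ ≤ ∑ e ∈ X, c e :=
        Finset.sum_le_sum_of_subset_of_nonneg
          (Finset.insert_subset ha (Finset.singleton_subset_iff.mpr hb))
          fun e _ _ => h0 e

end Aux

section Scen

def clauseScen (m : ℕ) (i : Fin m) : (Fin m × Fin 3) ⊕ Unit → ℝ :=
  fun it => match it with
    | Sum.inl (i', _) => if i' = i then 1 else 0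
    | Sum.inr _ => 0

def contrScen (m : ℕ) (e e' : Fin m × Fin 3) : (Fin m × Fin 3) ⊕ Unit → ℝ :=
  fun it => if it = Sum.inl e ∨ it = Sum.inl e' then 1 else 0

lemma clauseScen_mem {nv m : ℕ} (cl : Fin m → Fin 3 → Fin nv × Bool) (i : Fin m) :
    clauseScen m i ∈ SatScenarios cl := Or.inr ⟨i, rfl⟩

lemma contrScen_mem {nv m : ℕ} {cl : Fin m → Fin 3 → Fin nv × Bool}
    {e e' : Fin m × Fin 3} (h : Contr cl e e') :
    contrScen m e e' ∈ SatScenarios cl := Or.inl ⟨e, e', h, rfl⟩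

lemma scen_bounds {nv m : ℕ} {cl : Fin m → Fin 3 → Fin nv × Bool}
    {c : (Fin m × Fin 3) ⊕ Unit → ℝ} (hc : c ∈ SatScenarios cl) :
    ∀ e, 0 ≤ c e ∧ c e ≤ 1 := by
  rcases hc with ⟨e, e', -, rfl⟩ | ⟨i, rfl⟩ <;> intro it
  · dsimp only; split_ifs <;> norm_num
  · rcases it with ⟨j, t⟩ | u
    · dsimp only; split_ifs <;> norm_num
    · dsimp only; norm_num

lemma scen_r_zero {nv m : ℕ} {cl : Fin m → Fin 3 → Fin nv × Bool}
    {c : (Fin m × Fin 3) ⊕ Unit → ℝ} (hc : c ∈ SatScenarios cl) :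
    c (Sum.inr ()) = 0 := by
  rcases hc with ⟨e, e', -, rfl⟩ | ⟨i, rfl⟩
  · simp
  · rfl

end Scen

section Main

lemma swap_exists {m : ℕ} {X : Finset ((Fin m × Fin 3) ⊕ Unit)} (hX : X.card = m)
    (hr : Sum.inr () ∉ X) {c : (Fin m × Fin 3) ⊕ Unit → ℝ}
    (a : (Fin m × Fin 3) ⊕ Unit)
    (hc : ∀ y ∈ X, y ≠ a → c y = 0) (hcr : c (Sum.inr ()) = 0) :
    ∃ Y : Finset ((Fin m × Fin 3) ⊕ Unit),
      Y.card = m ∧ (Y \ X).card ≤ 1 ∧ ∑ e ∈ Y, c e = 0 := by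
  by_cases ha : a ∈ X
  · have hm1 : 1 ≤ m := hX ▸ Finset.card_pos.mpr ⟨a, ha⟩
    have hrne : Sum.inr () ∉ X.erase a := fun h => hr (Finset.mem_of_mem_erase h)
    refine ⟨insert (Sum.inr ()) (X.erase a), ?_, ?_, ?_⟩
    · rw [Finset.card_insert_of_notMem hrne, Finset.card_erase_of_mem ha, hX]
      omega
    · have hsub : insert (Sum.inr ()) (X.erase a) \ X ⊆ {Sum.inr ()} := by
        intro y hy
        rw [Finset.mem_sdiff, Finset.mem_insert] at hy
        rcases hy.1 with h | h
        · simp [h]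
        · exact absurd (Finset.mem_of_mem_erase h) hy.2
      calc (insert (Sum.inr ()) (X.erase a) \ X).card ≤ ({Sum.inr ()} :
            Finset ((Fin m × Fin 3) ⊕ Unit)).card := Finset.card_le_card hsub
        _ = 1 := Finset.card_singleton _
    · rw [Finset.sum_insert hrne, hcr, zero_add]
      exact Finset.sum_eq_zero fun y hy =>
        hc y (Finset.mem_of_mem_erase hy) (Finset.ne_of_mem_erase hy)
  · exact ⟨X, hX, by simp, Finset.sum_eq_zero fun y hy =>
      hc y hy (fun h => ha (h ▸ hy))⟩

def scenIdx (m : ℕ) : ((Fin m × Fin 3) × (Fin m × Fin 3)) ⊕ Fin m →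
    ((Fin m × Fin 3) ⊕ Unit → ℝ)
  | Sum.inl (e, e') => contrScen m e e'
  | Sum.inr i => clauseScen m i

lemma wSet_finite {nv m : ℕ} (cl : Fin m → Fin 3 → Fin nv × Bool)
    (C : (Fin m × Fin 3) ⊕ Unit → ℝ) (X : Finset ((Fin m × Fin 3) ⊕ Unit)) :
    {w : ℝ | ∃ c ∈ SatScenarios cl, w = f2 C c X m 1}.Finite := by
  apply (Set.finite_range (fun x => f2 C (scenIdx m x) X m 1)).subset
  rintro w ⟨c, hc, rfl⟩
  rcases hc with ⟨e, e', -, rfl⟩ | ⟨i, rfl⟩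
  · exact ⟨Sum.inl (e, e'), rfl⟩
  · exact ⟨Sum.inr i, rfl⟩

lemma wSet_nonempty {nv m : ℕ} (hm : 1 ≤ m) (cl : Fin m → Fin 3 → Fin nv × Bool)
    (C : (Fin m × Fin 3) ⊕ Unit → ℝ) (X : Finset ((Fin m × Fin 3) ⊕ Unit)) :
    {w : ℝ | ∃ c ∈ SatScenarios cl, w = f2 C c X m 1}.Nonempty :=
  ⟨f2 C (clauseScen m ⟨0, hm⟩) X m 1, clauseScen m ⟨0, hm⟩,
    clauseScen_mem cl ⟨0, hm⟩, rfl⟩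

lemma le_sSup_wSet {nv m : ℕ} {cl : Fin m → Fin 3 → Fin nv × Bool}
    {C : (Fin m × Fin 3) ⊕ Unit → ℝ} {X : Finset ((Fin m × Fin 3) ⊕ Unit)}
    {c : (Fin m × Fin 3) ⊕ Unit → ℝ} (hc : c ∈ SatScenarios cl) :
    f2 C c X m 1 ≤ sSup {w : ℝ | ∃ c ∈ SatScenarios cl, w = f2 C c X m 1} :=
  le_csSup (wSet_finite cl C X).bddAbove ⟨c, hc, rfl⟩

end Main

lemma nice_sSup_zero {nv m : ℕ} (hm : 1 ≤ m) (cl : Fin m → Fin 3 → Fin nv × Bool)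
    (C : (Fin m × Fin 3) ⊕ Unit → ℝ)
    (hC : C = Sum.elim (fun _ => 0) (fun _ => (nv : ℝ)))
    (g : Fin m → Fin 3) (hg : ∀ i j, ¬ Contr cl (i, g i) (j, g j)) :
    ∃ X : Finset ((Fin m × Fin 3) ⊕ Unit), X.card = m ∧
      sSup {w : ℝ | ∃ c ∈ SatScenarios cl, w = f2 C c X m 1} = 0 := by
  set X : Finset ((Fin m × Fin 3) ⊕ Unit) :=
    Finset.univ.image (fun i => Sum.inl (i, g i)) with hXdef
  have hinj : Function.Injective
      (fun i : Fin m => (Sum.inl (i, g i) : (Fin m × Fin 3) ⊕ Unit)) := by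
    intro i j h
    simp only [Sum.inl.injEq, Prod.mk.injEq] at h
    exact h.1
  have hcard : X.card = m := by
    rw [hXdef, Finset.card_image_of_injective _ hinj, Finset.card_univ,
      Fintype.card_fin]
  have hmem : ∀ y ∈ X, ∃ i : Fin m, Sum.inl (i, g i) = y := by
    intro y hy
    rw [hXdef, Finset.mem_image] at hy
    obtain ⟨i, -, hi⟩ := hy
    exact ⟨i, hi⟩
  have hr : Sum.inr () ∉ X := by
    intro h
    obtain ⟨i, hi⟩ := hmem _ h
    exact (Sum.inl_ne_inr hi)
  have hCX : ∑ e ∈ X, C e = 0 := by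
    apply Finset.sum_eq_zero
    intro y hy
    obtain ⟨i, hi⟩ := hmem y hy
    subst hC
    rw [← hi]
    rfl
  have hzero : ∀ c ∈ SatScenarios cl, f2 C c X m 1 = 0 := by
    intro c hc
    refine f2_eq_zero hCX (fun e => (scen_bounds hc e).1) ?_
    have hcr := scen_r_zero hc
    rcases hc with ⟨e, e', hee, rfl⟩ | ⟨i, rfl⟩
    · have hnot : ¬ (Sum.inl e ∈ X ∧ Sum.inl e' ∈ X) := by
        rintro ⟨h1, h2⟩
        obtain ⟨i, hi⟩ := hmem _ h1
        obtain ⟨j, hj⟩ := hmem _ h2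
        have hie : (i, g i) = e := Sum.inl.inj hi
        have hje : (j, g j) = e' := Sum.inl.inj hj
        exact hg i j (by rw [hie, hje]; exact hee)
      by_cases he' : Sum.inl e' ∈ X
      · refine swap_exists hcard hr (Sum.inl e') ?_ hcr
        intro y hy hya
        have : ¬ (y = Sum.inl e ∨ y = Sum.inl e') := by
          rintro (rfl | rfl)
          · exact hnot ⟨hy, he'⟩
          · exact hya rfl
        simp only [if_neg this]
      · refine swap_exists hcard hr (Sum.inl e) ?_ hcr
        intro y hy hya
        have : ¬ (y = Sum.inl e ∨ y = Sum.inl e') := by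
          rintro (rfl | rfl)
          · exact hya rfl
          · exact he' hy
        simp only [if_neg this]
    · refine swap_exists hcard hr (Sum.inl (i, g i)) ?_ hcr
      intro y hy hya
      obtain ⟨j, hj⟩ := hmem y hy
      rw [← hj]
      show clauseScen m i (Sum.inl (j, g j)) = 0
      have hji : j ≠ i := by
        rintro rfl
        exact hya hj.symm
      have hval : clauseScen m i (Sum.inl (j, g j)) = if j = i then (1:ℝ) else 0 := rfl
      rw [hval, if_neg hji]
  have hset : {w : ℝ | ∃ c ∈ SatScenarios cl, w = f2 C c X m 1} = {0} := by
    apply Set.eq_singleton_iff_unique_mem.mpr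
    constructor
    · exact ⟨clauseScen m ⟨0, hm⟩, clauseScen_mem cl ⟨0, hm⟩,
        (hzero _ (clauseScen_mem cl ⟨0, hm⟩)).symm⟩
    · rintro w ⟨c, hc, rfl⟩
      exact hzero c hc
  exact ⟨X, hcard, by rw [hset]; exact csSup_singleton 0⟩

lemma dichotomy {nv m : ℕ} (hm : 1 ≤ m) (hnv : 1 ≤ nv)
    (cl : Fin m → Fin 3 → Fin nv × Bool)
    (C : (Fin m × Fin 3) ⊕ Unit → ℝ)
    (hC : C = Sum.elim (fun _ => 0) (fun _ => (nv : ℝ)))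
    (X : Finset ((Fin m × Fin 3) ⊕ Unit)) (hX : X.card = m) :
    (∃ g : Fin m → Fin 3, (∀ i, Sum.inl (i, g i) ∈ X) ∧
        ∀ i j, ¬ Contr cl (i, g i) (j, g j)) ∨
      ∃ c ∈ SatScenarios cl, 1 ≤ f2 C c X m 1 := by
  have hC0 : ∀ e, 0 ≤ C e := by
    subst hC
    rintro (e | u)
    · exact le_refl 0
    · exact Nat.cast_nonneg nv
  by_cases hr : Sum.inr () ∈ X
  · right
    refine ⟨clauseScen m ⟨0, hm⟩, clauseScen_mem cl _, ?_⟩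
    have hCr : C (Sum.inr ()) = (nv : ℝ) := by rw [hC]; rfl
    have h1 : (nv : ℝ) ≤ ∑ e ∈ X, C e := by
      have h := Finset.single_le_sum (f := C) (fun e _ => hC0 e) hr
      rwa [hCr] at h
    have h2 := sumC_le_f2 (C := C)
      (fun e => (scen_bounds (clauseScen_mem cl ⟨0, hm⟩) e).1) X m 1
    have h3 : (1:ℝ) ≤ (nv:ℝ) := by exact_mod_cast hnv
    linarith
  · by_cases htwo : ∃ (i : Fin m) (t t' : Fin 3), t ≠ t' ∧
        Sum.inl (i, t) ∈ X ∧ Sum.inl (i, t') ∈ X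
    · right
      obtain ⟨i, t, t', htt, ht, ht'⟩ := htwo
      refine ⟨clauseScen m i, clauseScen_mem cl i, ?_⟩
      apply f2_ge_one (Finset.sum_nonneg fun e _ => hC0 e) hX
      intro Y hY1 hY2
      apply sum_swap_ge (scen_bounds (clauseScen_mem cl i)) (by rw [hX, hY1]) hY2
      refine two_le_sum (fun e => (scen_bounds (clauseScen_mem cl i) e).1)
        (a := Sum.inl (i, t)) (b := Sum.inl (i, t')) (by simp [htt]) ht ht' ?_ ?_
      · have hv : clauseScen m i (Sum.inl (i, t)) = if i = i then (1:ℝ) else 0 := rfl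
        rw [hv, if_pos rfl]
      · have hv : clauseScen m i (Sum.inl (i, t')) = if i = i then (1:ℝ) else 0 := rfl
        rw [hv, if_pos rfl]
    · push_neg at htwo
      have hfib : X.card = ∑ i ∈ Finset.univ,
          (X.filter (fun e => Sum.elim Prod.fst (fun _ => (⟨0, hm⟩ : Fin m)) e = i)).card :=
        Finset.card_eq_sum_card_fiberwise (fun x _ => Finset.mem_univ _)
      have hle : ∀ i ∈ Finset.univ,
          (X.filter (fun e => Sum.elim Prod.fst (fun _ => (⟨0, hm⟩ : Fin m)) e = i)).card ≤ 1 := by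
        intro i _
        rw [Finset.card_le_one]
        intro a ha b hb
        rw [Finset.mem_filter] at ha hb
        rcases a with ⟨j1, t1⟩ | u1
        · rcases b with ⟨j2, t2⟩ | u2
          · have hj : j1 = j2 := by
              have hj1 : j1 = i := ha.2
              have hj2 : j2 = i := hb.2
              rw [hj1, hj2]
            subst hj
            by_cases htt : t1 = t2
            · rw [htt]
            · exact absurd hb.1 (htwo j1 t1 t2 htt ha.1)
          · cases u2; exact absurd hb.1 hr
        · cases u1; exact absurd ha.1 hr
      have hone := (Finset.sum_eq_sum_iff_of_le hle).mp (by
        rw [← hfib, hX]; simp)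
      have hex : ∀ i : Fin m, ∃ t : Fin 3, Sum.inl (i, t) ∈ X := by
        intro i
        obtain ⟨a, hafil⟩ := Finset.card_eq_one.mp (hone i (Finset.mem_univ i))
        have ha : a ∈ X.filter
            (fun e => Sum.elim Prod.fst (fun _ => (⟨0, hm⟩ : Fin m)) e = i) := by
          rw [hafil]; exact Finset.mem_singleton_self a
        rw [Finset.mem_filter] at ha
        rcases a with ⟨j, t⟩ | u
        · have hj : j = i := ha.2
          exact ⟨t, hj ▸ ha.1⟩
        · cases u; exact absurd ha.1 hr
      choose g hgmem using hex
      by_cases hcontr : ∃ i j, Contr cl (i, g i) (j, g j)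
      · right
        obtain ⟨i, j, hij⟩ := hcontr
        refine ⟨contrScen m (i, g i) (j, g j), contrScen_mem hij, ?_⟩
        apply f2_ge_one (Finset.sum_nonneg fun e _ => hC0 e) hX
        intro Y hY1 hY2
        apply sum_swap_ge (scen_bounds (contrScen_mem hij)) (by rw [hX, hY1]) hY2
        have hne : (Sum.inl (i, g i) : (Fin m × Fin 3) ⊕ Unit) ≠ Sum.inl (j, g j) := by
          intro h
          have h' := Sum.inl.inj h
          exact hij.2 (by rw [h'])
        refine two_le_sum (fun e => (scen_bounds (contrScen_mem hij) e).1) hne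
          (hgmem i) (hgmem j) ?_ ?_
        · simp [contrScen]
        · simp [contrScen]
      · left
        push_neg at hcontr
        exact ⟨g, hgmem, hcontr⟩

lemma sat_iff_good {nv m : ℕ} (cl : Fin m → Fin 3 → Fin nv × Bool) :
    (∃ σ : Fin nv → Bool, ∀ i : Fin m, ∃ t : Fin 3, σ (cl i t).1 = (cl i t).2) ↔
      ∃ g : Fin m → Fin 3, ∀ i j : Fin m, ¬ Contr cl (i, g i) (j, g j) := by
  constructor
  · rintro ⟨σ, hσ⟩
    choose g hg using hσ
    refine ⟨g, fun i j hcon => ?_⟩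
    have h1 : (cl i (g i)).1 = (cl j (g j)).1 := hcon.1
    have h2 : (cl i (g i)).2 ≠ (cl j (g j)).2 := hcon.2
    apply h2
    rw [← hg i, ← hg j, h1]
  · rintro ⟨g, hg⟩
    classical
    refine ⟨fun v => if ∃ i : Fin m, (cl i (g i)).1 = v ∧ (cl i (g i)).2 = true
      then true else false, fun i => ⟨g i, ?_⟩⟩
    by_cases hb : (cl i (g i)).2 = true
    · simp only [hb]
      rw [if_pos ⟨i, rfl, hb⟩]
    · have hb' : (cl i (g i)).2 = false := by
        cases h : (cl i (g i)).2
        · rfl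
        · exact absurd h hb
      simp only [hb']
      rw [if_neg]
      rintro ⟨j, hj1, hj2⟩
      refine hg i j ⟨hj1.symm, ?_⟩
      show (cl i (g i)).2 ≠ (cl j (g j)).2
      rw [hb', hj2]
      simp

theorem threeSat_recoverable_reduction (nv m : ℕ) (hm : 1 ≤ m)
    (cl : Fin m → Fin 3 → Fin nv × Bool)
    (C : (Fin m × Fin 3) ⊕ Unit → ℝ)
    (hC : C = Sum.elim (fun _ => 0) (fun _ => (nv : ℝ))) :
    ((∃ σ : Fin nv → Bool, ∀ i : Fin m, ∃ t : Fin 3, σ (cl i t).1 = (cl i t).2) ↔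
      sInf {v : ℝ | ∃ X : Finset ((Fin m × Fin 3) ⊕ Unit), X.card = m ∧
        v = sSup {w : ℝ | ∃ c ∈ SatScenarios cl, w = f2 C c X m 1}} = 0) ∧
    ((¬ ∃ σ : Fin nv → Bool, ∀ i : Fin m, ∃ t : Fin 3,
        σ (cl i t).1 = (cl i t).2) →
      1 ≤ sInf {v : ℝ | ∃ X : Finset ((Fin m × Fin 3) ⊕ Unit), X.card = m ∧
        v = sSup {w : ℝ | ∃ c ∈ SatScenarios cl, w = f2 C c X m 1}}) ∧
    ((∃ X : Finset ((Fin m × Fin 3) ⊕ Unit), X.card = m ∧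
        sSup {w : ℝ | ∃ c ∈ SatScenarios cl, w = f2 C c X m 1} = 0) ↔
      (∃ g : Fin m → Fin 3, ∀ i j : Fin m, ¬ Contr cl (i, g i) (j, g j))) := by
  have hnv : 1 ≤ nv := by
    rcases Nat.eq_zero_or_pos nv with h | h
    · subst h; exact ((cl ⟨0, hm⟩ 0).1).elim0
    · exact h
  have hC0 : ∀ e, 0 ≤ C e := by
    subst hC
    rintro (e | u)
    · exact le_refl 0
    · exact Nat.cast_nonneg nv
  have hnonneg : ∀ X : Finset ((Fin m × Fin 3) ⊕ Unit),
      0 ≤ sSup {w : ℝ | ∃ c ∈ SatScenarios cl, w = f2 C c X m 1} := by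
    intro X
    have h0 : 0 ≤ f2 C (clauseScen m ⟨0, hm⟩) X m 1 :=
      f2_nonneg hC0 (fun e => (scen_bounds (clauseScen_mem cl ⟨0, hm⟩) e).1) X m 1
    exact le_trans h0 (le_sSup_wSet (clauseScen_mem cl ⟨0, hm⟩))
  have honempty : ∃ X : Finset ((Fin m × Fin 3) ⊕ Unit), X.card = m := by
    refine ⟨Finset.univ.image (fun i : Fin m => Sum.inl (i, (0 : Fin 3))), ?_⟩
    rw [Finset.card_image_of_injective, Finset.card_univ, Fintype.card_fin]
    intro i j h
    simp only [Sum.inl.injEq, Prod.mk.injEq] at h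
    exact h.1
  have part3 : (∃ X : Finset ((Fin m × Fin 3) ⊕ Unit), X.card = m ∧
        sSup {w : ℝ | ∃ c ∈ SatScenarios cl, w = f2 C c X m 1} = 0) ↔
      (∃ g : Fin m → Fin 3, ∀ i j : Fin m, ¬ Contr cl (i, g i) (j, g j)) := by
    constructor
    · rintro ⟨X, hX, hsup⟩
      rcases dichotomy hm hnv cl C hC X hX with ⟨g, -, hg⟩ | ⟨c, hc, h1⟩
      · exact ⟨g, hg⟩
      · exfalso
        have h2 := le_sSup_wSet (C := C) (X := X) hc
        rw [hsup] at h2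
        linarith
    · rintro ⟨g, hg⟩
      exact nice_sSup_zero hm cl C hC g hg
  have part2 : (¬ ∃ σ : Fin nv → Bool, ∀ i : Fin m, ∃ t : Fin 3,
        σ (cl i t).1 = (cl i t).2) →
      1 ≤ sInf {v : ℝ | ∃ X : Finset ((Fin m × Fin 3) ⊕ Unit), X.card = m ∧
        v = sSup {w : ℝ | ∃ c ∈ SatScenarios cl, w = f2 C c X m 1}} := by
    intro hunsat
    have hng : ¬ ∃ g : Fin m → Fin 3, ∀ i j : Fin m, ¬ Contr cl (i, g i) (j, g j) :=
      fun hgex => hunsat ((sat_iff_good cl).mpr hgex)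
    apply le_csInf
    · obtain ⟨X0, hX0⟩ := honempty
      exact ⟨_, X0, hX0, rfl⟩
    · rintro v ⟨X, hX, rfl⟩
      rcases dichotomy hm hnv cl C hC X hX with ⟨g, -, hg⟩ | ⟨c, hc, h1⟩
      · exact absurd ⟨g, hg⟩ hng
      · exact le_trans h1 (le_sSup_wSet hc)
  refine ⟨?_, part2, part3⟩
  constructor
  · intro hsat
    obtain ⟨g, hg⟩ := (sat_iff_good cl).mp hsat
    obtain ⟨X, hX, hsup⟩ := nice_sSup_zero hm cl C hC g hg
    have hmem : (0:ℝ) ∈ {v : ℝ | ∃ X : Finset ((Fin m × Fin 3) ⊕ Unit),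
        X.card = m ∧ v = sSup {w : ℝ | ∃ c ∈ SatScenarios cl, w = f2 C c X m 1}} :=
      ⟨X, hX, hsup.symm⟩
    apply le_antisymm
    · apply csInf_le _ hmem
      refine ⟨0, ?_⟩
      rintro v ⟨X', hX', rfl⟩
      exact hnonneg X'
    · apply le_csInf ⟨0, hmem⟩
      rintro v ⟨X', hX', rfl⟩
      exact hnonneg X'
  · intro hinf
    by_contra hunsat
    have h1 := part2 hunsat
    rw [hinf] at h1
    linarith
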